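/- If a strictly increasing sequence (a_n)_{n∈ℕ} of positive integers is quasi-arithmetic of degree d for some positive integer d, then there is no real number α such that the sequence ({a_n α})_{n∈ℕ} of fractional parts has Poissonian pair correlations. -/

import Mathlib

open Finset Filter
open scoped Classical

/-- Distance to the nearest integer. -/
noncomputable def nint (x : ℝ) : ℝ := |x - round x|

/-- Number of pairs `1 ≤ i ≠ j ≤ N` with `‖x i - x j‖ ≤ s / N`. -/
noncomputable def pairCount (x : ℕ → ℝ) (N : ℕ) (s : ℝ) : ℕ :=
  (((Finset.Icc 1 N) ×ˢ (Finset.Icc 1 N)).filter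
    fun p => p.1 ≠ p.2 ∧ nint (x p.1 - x p.2) ≤ s / N).card

/-- A sequence in `[0,1)` has Poissonian pair correlations. -/
noncomputable def PoissonianPairCorrelations (x : ℕ → ℝ) : Prop :=
  ∀ s : ℝ, 0 < s →
    Tendsto (fun N : ℕ => (pairCount x N s : ℝ) / N) atTop (nhds (2 * s))

/-- The set of the first `N` elements of the sequence `a` (indexed from 1). -/
def firstN (a : ℕ → ℕ) (N : ℕ) : Finset ℤ :=
  (Finset.Icc 1 N).image fun n => (a n : ℤ)

/-- The `d`-dimensional arithmetic progression
`{h + ∑ j r j * k j | 0 ≤ r j < s j}`. -/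
def dimAP (d : ℕ) (h : ℤ) (k : Fin d → ℤ) (s : Fin d → ℕ) : Finset ℤ :=
  (Fintype.piFinset fun j => Finset.range (s j)).image
    fun r => h + ∑ j, (r j : ℤ) * k j

/-- A strictly increasing sequence of positive integers is quasi-arithmetic of
degree `d`. -/
def QuasiArithmetic (a : ℕ → ℕ) (d : ℕ) : Prop :=
  ∃ C K : ℝ, 0 < C ∧ 0 < K ∧
    ∃ N : ℕ → ℕ, StrictMono N ∧ (∀ i, 0 < N i) ∧
      ∀ i, ∃ A : Finset ℤ, A ⊆ firstN a (N i) ∧ (C * N i : ℝ) ≤ A.card ∧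
        ∃ (h : ℤ) (k : Fin d → ℤ) (s : Fin d → ℕ),
          (∀ j, 0 < s j) ∧ A ⊆ dimAP d h k s ∧ ((∏ j, s j : ℕ) : ℝ) ≤ K * N i


lemma nint_nonneg (x : ℝ) : 0 ≤ nint x := abs_nonneg _

lemma nint_le_int (x : ℝ) (z : ℤ) : nint x ≤ |x - z| := by
  rcases eq_or_ne z (round x) with rfl | hz
  · exact le_of_eq rfl
  · have h1 : |x - round x| ≤ 1/2 := abs_sub_round x
    have h2 : (1:ℝ) ≤ |(z:ℝ) - round x| := by
      have : z - round x ≠ 0 := sub_ne_zero.mpr (by exact_mod_cast hz)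
      have : (1:ℤ) ≤ |z - round x| := Int.one_le_abs this
      calc (1:ℝ) ≤ ((|z - round x| : ℤ) : ℝ) := by exact_mod_cast this
        _ = |(z:ℝ) - (round x : ℝ)| := by push_cast; ring_nf
    have h3 : |(z:ℝ) - round x| ≤ |x - z| + |x - round x| := by
      have := abs_sub_abs_le_abs_sub ((z:ℝ) - x) ((round x : ℝ) - x)
      calc |(z:ℝ) - round x| = |((z:ℝ) - x) - ((round x:ℝ) - x)| := by ring_nf
        _ ≤ |(z:ℝ) - x| + |(round x:ℝ) - x| := abs_sub _ _
        _ = |x - z| + |x - round x| := by rw [abs_sub_comm ((z:ℝ)) x, abs_sub_comm ((round x:ℝ)) x]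
    unfold nint; linarith
lemma nint_le_abs (x : ℝ) : nint x ≤ |x| := by simpa using nint_le_int x 0
lemma nint_add_int (x : ℝ) (z : ℤ) : nint (x + z) = nint x := by
  unfold nint; rw [round_add_intCast]; push_cast; ring_nf
lemma nint_add_le (x y : ℝ) : nint (x + y) ≤ nint x + nint y := by
  have h := nint_le_int (x + y) (round x + round y)
  unfold nint at *
  calc |x + y - round (x+y)| ≤ |x + y - ((round x + round y : ℤ) : ℝ)| := h
    _ = |(x - round x) + (y - round y)| := by push_cast; ring_nf
    _ ≤ |x - round x| + |y - round y| := abs_add_le _ _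
lemma nint_neg (x : ℝ) : nint (-x) = nint x := by
  have h1 : nint (-x) ≤ nint x := by
    have := nint_le_int (-x) (-round x); unfold nint at *
    calc |-x - round (-x)| ≤ |(-x) - ((-round x : ℤ):ℝ)| := this
      _ = |x - round x| := by push_cast; rw [show -x - -(round x:ℝ) = -(x - round x) by ring, abs_neg]
  have h2 : nint x ≤ nint (-x) := by
    have := nint_le_int x (-round (-x)); unfold nint at *
    calc |x - round x| ≤ |x - ((-round (-x) : ℤ):ℝ)| := this
      _ = |-x - round (-x)| := by push_cast; rw [show x - -(round (-x):ℝ) = -(-x - round (-x)) by ring, abs_neg]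
  linarith
lemma nint_sub_le (x y : ℝ) : nint (x - y) ≤ nint x + nint y := by
  have := nint_add_le x (-y); rw [nint_neg y] at this; simpa [sub_eq_add_neg] using this
lemma nint_nsmul_le (n : ℕ) (x : ℝ) : nint (n * x) ≤ n * nint x := by
  induction n with
  | zero => simp [nint]
  | succ m ih =>
      have : ((m+1 : ℕ) : ℝ) * x = (m : ℝ) * x + x := by push_cast; ring
      rw [this]
      calc nint ((m:ℝ)*x + x) ≤ nint ((m:ℝ)*x) + nint x := nint_add_le _ _
        _ ≤ m * nint x + nint x := by linarith
        _ = ((m+1 : ℕ):ℝ) * nint x := by push_cast; ring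
lemma nint_zsmul_le (n : ℤ) (x : ℝ) : nint (n * x) ≤ |(n:ℝ)| * nint x := by
  rcases le_or_gt 0 n with hn | hn
  · lift n to ℕ using hn
    simpa [abs_of_nonneg (by positivity : (0:ℝ) ≤ (n:ℝ))] using nint_nsmul_le n x
  · obtain ⟨m, rfl⟩ : ∃ m : ℕ, n = -(m:ℤ) := ⟨n.natAbs, by omega⟩
    have : ((-(m:ℤ) : ℤ) : ℝ) * x = -((m:ℝ) * x) := by push_cast; ring
    rw [this, nint_neg]
    have : |((-(m:ℤ):ℤ):ℝ)| = (m:ℝ) := by push_cast; simp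
    rw [this]; exact nint_nsmul_le m x
lemma nint_zero : nint 0 = 0 := by simp [nint]
open scoped Classical

variable {γ : Type*}

lemma fiber_card_sq (A : Finset ℤ) (f : ℤ → γ) (Γ : Finset γ) (hmap : ∀ x ∈ A, f x ∈ Γ) :
    ((A ×ˢ A).filter fun q => f q.1 = f q.2).card
      = ∑ c ∈ Γ, (A.filter fun x => f x = c).card ^ 2 := by
  classical
  rw [Finset.card_eq_sum_card_fiberwise (f := fun q => f q.1) (t := Γ)
    (fun q hq => hmap q.1 (Finset.mem_product.mp (Finset.mem_filter.mp hq).1).1)]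
  refine Finset.sum_congr rfl fun c _ => ?_
  have : ((A ×ˢ A).filter (fun q => f q.1 = f q.2)).filter (fun q => f q.1 = c)
      = (A.filter fun x => f x = c) ×ˢ (A.filter fun x => f x = c) := by
    ext ⟨x, y⟩
    simp only [Finset.mem_filter, Finset.mem_product]
    constructor
    · rintro ⟨⟨⟨hx, hy⟩, hxy⟩, hc⟩
      exact ⟨⟨hx, hc⟩, hy, hxy ▸ hc⟩
    · rintro ⟨⟨hx, hc⟩, hy, hc'⟩
      exact ⟨⟨⟨hx, hy⟩, by rw [hc, hc']⟩, hc⟩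
  rw [this, Finset.card_product, sq]

lemma card_eq_sum_fibers (A : Finset ℤ) (f : ℤ → γ) (Γ : Finset γ) (hmap : ∀ x ∈ A, f x ∈ Γ) :
    A.card = ∑ c ∈ Γ, (A.filter fun x => f x = c).card :=
  Finset.card_eq_sum_card_fiberwise hmap

lemma diag_card' (A : Finset ℤ) : ((A ×ˢ A).filter fun q : ℤ × ℤ => q.1 = q.2).card = A.card := by
  classical
  have : ((A ×ˢ A).filter fun q : ℤ × ℤ => q.1 = q.2) = A.image (fun x => (x, x)) := by
    ext ⟨x, y⟩
    simp only [Finset.mem_filter, Finset.mem_product, Finset.mem_image, Prod.mk.injEq]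
    constructor
    · rintro ⟨⟨hx, hy⟩, rfl⟩; exact ⟨x, hx, rfl, rfl⟩
    · rintro ⟨z, hz, rfl, rfl⟩; exact ⟨⟨hz, hz⟩, rfl⟩
  rw [this, Finset.card_image_of_injective _ (fun x y hxy => (Prod.mk.injEq _ _ _ _).mp hxy |>.1)]

/-- Interval pigeonhole: many off-diagonal pairs with equal `f`-value. -/
lemma pair_lower (A : Finset ℤ) (f : ℤ → γ) (Γ : Finset γ) (hΓ : 0 < Γ.card)
    (hmap : ∀ x ∈ A, f x ∈ Γ) (P : Finset (ℤ × ℤ))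
    (hP : ∀ q : ℤ × ℤ, q.1 ∈ A → q.2 ∈ A → q.1 ≠ q.2 → f q.1 = f q.2 → q ∈ P) :
    (A.card : ℝ) ^ 2 / Γ.card - A.card ≤ (P.card : ℝ) := by
  classical
  have hPsub : ((A ×ˢ A).filter fun q => q.1 ≠ q.2 ∧ f q.1 = f q.2) ⊆ P := by
    intro q hq
    rw [Finset.mem_filter, Finset.mem_product] at hq
    exact hP q hq.1.1 hq.1.2 hq.2.1 hq.2.2
  have hmono : (((A ×ˢ A).filter fun q => q.1 ≠ q.2 ∧ f q.1 = f q.2).card : ℝ) ≤ (P.card : ℝ) := by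
    exact_mod_cast Finset.card_le_card hPsub
  refine le_trans ?_ hmono
  set base := (A ×ˢ A).filter fun q : ℤ × ℤ => f q.1 = f q.2 with hbase
  -- Cauchy–Schwarz
  have hCS : (A.card : ℝ) ^ 2 ≤ (Γ.card : ℝ) * base.card := by
    have h1 := Finset.sum_mul_sq_le_sq_mul_sq Γ (fun _ => (1:ℝ))
      (fun c => ((A.filter fun x => f x = c).card : ℝ))
    have h2 : (∑ c ∈ Γ, (1:ℝ) * ((A.filter fun x => f x = c).card : ℝ)) = (A.card : ℝ) := by
      simp only [one_mul]
      rw [card_eq_sum_fibers A f Γ hmap]; push_cast; rfl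
    have h3 : (∑ c ∈ Γ, ((1:ℝ))^2) = (Γ.card : ℝ) := by simp
    have h4 : (∑ c ∈ Γ, ((A.filter fun x => f x = c).card : ℝ)^2) = (base.card : ℝ) := by
      rw [hbase, fiber_card_sq A f Γ hmap]; push_cast; rfl
    rw [h2, h3, h4] at h1; exact h1
  -- remove diagonal
  have hsplit : (base.filter fun q => q.1 = q.2).card + (base.filter fun q => ¬ q.1 = q.2).card
      = base.card := Finset.card_filter_add_card_filter_not _
  have hdiag : (base.filter fun q : ℤ × ℤ => q.1 = q.2).card ≤ A.card := by
    have hsub : (base.filter fun q : ℤ × ℤ => q.1 = q.2)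
        ⊆ (A ×ˢ A).filter fun q : ℤ × ℤ => q.1 = q.2 :=
      Finset.filter_subset_filter _ (Finset.filter_subset _ _)
    calc _ ≤ ((A ×ˢ A).filter fun q : ℤ × ℤ => q.1 = q.2).card := Finset.card_le_card hsub
      _ = A.card := diag_card' A
  have heq : (base.filter fun q => ¬ q.1 = q.2)
      = (A ×ˢ A).filter fun q => q.1 ≠ q.2 ∧ f q.1 = f q.2 := by
    rw [hbase, Finset.filter_filter]
    apply Finset.filter_congr; intro q _; tauto
  have hΓR : (0:ℝ) < Γ.card := by exact_mod_cast hΓ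
  rw [div_sub' (ne_of_gt hΓR), div_le_iff₀ hΓR]
  have : ((base.filter fun q => ¬ q.1 = q.2).card : ℝ) ≥ (base.card : ℝ) - A.card := by
    have := hsplit
    have hd : ((base.filter fun q => q.1 = q.2).card : ℝ) ≤ (A.card:ℝ) := by exact_mod_cast hdiag
    have : ((base.filter fun q => q.1 = q.2).card : ℝ)
        + ((base.filter fun q => ¬ q.1 = q.2).card : ℝ) = base.card := by exact_mod_cast this
    linarith
  rw [← heq]
  nlinarith [this, hCS]

lemma floor_close {u v B : ℝ} (hB : 0 < B) (hu : 0 ≤ u) (hv : 0 ≤ v)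
    (h : ⌊u * B⌋₊ = ⌊v * B⌋₊) : |u - v| < 1 / B := by
  have h1 : (⌊u*B⌋₊ : ℝ) ≤ u*B := Nat.floor_le (by positivity)
  have h2 : u*B < ⌊u*B⌋₊ + 1 := Nat.lt_floor_add_one _
  have h3 : (⌊v*B⌋₊ : ℝ) ≤ v*B := Nat.floor_le (by positivity)
  have h4 : v*B < ⌊v*B⌋₊ + 1 := Nat.lt_floor_add_one _
  rw [h] at h1 h2
  have hd : |u*B - v*B| < 1 := by rw [abs_sub_lt_iff]; constructor <;> linarith
  have : |u - v| * B < 1 := by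
    calc |u - v| * B = |u - v| * |B| := by rw [abs_of_pos hB]
      _ = |u*B - v*B| := by rw [← abs_mul]; ring_nf
      _ < 1 := hd
  rw [lt_div_iff₀ hB]; exact this

lemma pow_bound (d : ℕ) (hd : 0 < d) : ((1:ℝ) + 1/(2*d))^d ≤ 2 := by
  have hdR : (0:ℝ) < d := by exact_mod_cast hd
  have h1 : (1:ℝ) + 1/(2*d) ≤ Real.exp (1/(2*d)) := by
    have := Real.add_one_le_exp (1/(2*(d:ℝ))); linarith
  have h2 : ((1:ℝ)+1/(2*d))^d ≤ Real.exp (1/(2*(d:ℝ)))^d :=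
    pow_le_pow_left₀ (by positivity) h1 d
  have h3 : Real.exp (1/(2*(d:ℝ)))^d = Real.exp (d * (1/(2*(d:ℝ)))) := by
    rw [← Real.exp_nat_mul]
  have h4 : (d:ℝ) * (1/(2*(d:ℝ))) = 1/2 := by field_simp
  have h6 : Real.exp ((1:ℝ)/2) * Real.exp ((1:ℝ)/2) = Real.exp 1 := by
    rw [← Real.exp_add]; norm_num
  have h5 : Real.exp ((1:ℝ)/2) ≤ 2 := by
    nlinarith [Real.exp_pos ((1:ℝ)/2), Real.exp_one_lt_d9]
  calc ((1:ℝ)+1/(2*d))^d ≤ Real.exp (1/(2*(d:ℝ)))^d := h2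
    _ = Real.exp ((1:ℝ)/2) := by rw [h3, h4]
    _ ≤ 2 := h5

lemma diag_card_range (n : ℕ) :
    ((range n ×ˢ range n).filter fun p : ℕ × ℕ => p.1 = p.2).card = n := by
  have : ((range n ×ˢ range n).filter fun p : ℕ × ℕ => p.1 = p.2)
      = (range n).image (fun t => (t, t)) := by
    ext ⟨x, y⟩
    simp only [Finset.mem_filter, Finset.mem_product, Finset.mem_image, Prod.mk.injEq]
    constructor
    · rintro ⟨⟨hx, _⟩, rfl⟩; exact ⟨x, hx, rfl, rfl⟩
    · rintro ⟨z, hz, rfl, rfl⟩; exact ⟨⟨hz, hz⟩, rfl⟩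
  rw [this, Finset.card_image_of_injective _ (fun x y hxy => (Prod.mk.injEq _ _ _ _).mp hxy |>.1),
    Finset.card_range]

lemma icc_card_real (a b : ℤ) (hab : a ≤ b + 1) :
    ((Finset.Icc a b).card : ℝ) = (b : ℝ) - (a : ℝ) + 1 := by
  rw [Int.card_Icc]
  have h1 : ((b + 1 - a).toNat : ℤ) = b + 1 - a := Int.toNat_of_nonneg (by omega)
  have h2 : (((b + 1 - a).toNat : ℕ) : ℝ) = (((b + 1 - a : ℤ)) : ℝ) := by
    exact_mod_cast congrArg (fun z : ℤ => (z : ℝ)) h1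
  rw [h2]; push_cast; ring

section Core

set_option maxHeartbeats 3200000 in
/-- Combinatorial core. -/
lemma core (α : ℝ) (C K : ℝ) (hC0 : 0 < C) (hC1 : C ≤ 1) (hK : 1 ≤ K)
    (d : ℕ) (hd : 0 < d) (T'' T Sc : ℕ)
    (hT'' : 8 * K / C ^ 2 ≤ (T'' : ℝ)) (hT : T = 8 * d * T'')
    (hSc : (2 / C ^ 2) * (((T : ℝ) ^ d + 1) / T'' + 1) ≤ (Sc : ℝ))
    (N : ℕ) (hNSc : Sc ≤ N)
    (A : Finset ℤ) (hAcard : C * N ≤ (A.card : ℝ)) (hAN : A.card ≤ N)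
    (h : ℤ) (k : Fin d → ℤ) (s : Fin d → ℕ) (hs : ∀ j, 0 < s j)
    (hA : A ⊆ dimAP d h k s) (hM : ((∏ j, s j : ℕ) : ℝ) ≤ K * N) :
    ∃ m₀ : ℤ, m₀ ≠ 0 ∧ nint ((m₀ : ℝ) * α) ≤ (2 * Sc * T'' : ℝ) / N ∧
      ((N : ℝ) / T'' ≤ (((A ×ˢ A).filter fun q : ℤ × ℤ => q.1 - q.2 = m₀).card : ℝ)) := by
  classical
  have hC2 : (0:ℝ) < C ^ 2 := by positivity
  have hC21 : C ^ 2 ≤ 1 := by nlinarith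
  have hT''8 : (8 : ℝ) ≤ (T'' : ℝ) := by
    have h1 : (8 : ℝ) ≤ 8 * K / C ^ 2 := by rw [le_div_iff₀ hC2]; nlinarith
    linarith
  have hT''pos : 0 < T'' := by exact_mod_cast lt_of_lt_of_le (by norm_num : (0:ℝ) < 8) hT''8
  have hT''R : (0:ℝ) < (T'':ℝ) := by exact_mod_cast hT''pos
  have hTpos : 0 < T := by rw [hT]; positivity
  have hTR : (0:ℝ) < (T:ℝ) := by exact_mod_cast hTpos
  have hSc2 : (2 : ℝ) ≤ (Sc : ℝ) := by
    have h1 : (1:ℝ) ≤ ((T : ℝ) ^ d + 1) / (T'':ℝ) + 1 := by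
      have : (0:ℝ) ≤ ((T:ℝ)^d + 1) / (T'':ℝ) := by positivity
      linarith
    have h2 : (2:ℝ) ≤ 2 / C ^ 2 := by rw [le_div_iff₀ hC2]; nlinarith
    calc (2:ℝ) = 2 * 1 := by ring
      _ ≤ (2 / C^2) * (((T : ℝ) ^ d + 1) / (T'':ℝ) + 1) := by
          apply mul_le_mul h2 h1 (by norm_num) (by positivity)
      _ ≤ (Sc:ℝ) := hSc
  have hScpos : 0 < Sc := by exact_mod_cast lt_of_lt_of_le (by norm_num : (0:ℝ) < 2) hSc2
  have hScR : (0:ℝ) < (Sc:ℝ) := by exact_mod_cast hScpos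
  have hNpos : 0 < N := lt_of_lt_of_le hScpos hNSc
  have hNR : (0:ℝ) < (N:ℝ) := by exact_mod_cast hNpos
  have hNScR : (Sc : ℝ) ≤ (N:ℝ) := by exact_mod_cast hNSc
  have hLR : (0:ℝ) < (A.card:ℝ) := lt_of_lt_of_le (by positivity) hAcard
  have hANR : (A.card : ℝ) ≤ (N:ℝ) := by exact_mod_cast hAN
  -- representation function
  have hrepex : ∀ x ∈ A, ∃ ρ : Fin d → ℕ, (∀ j, ρ j < s j) ∧ x = h + ∑ j, (ρ j : ℤ) * k j := by
    intro x hx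
    have hx' := hA hx
    rw [dimAP, Finset.mem_image] at hx'
    obtain ⟨ρ, hρ, hxx⟩ := hx'
    exact ⟨ρ, fun j => by simpa using (Fintype.mem_piFinset.mp hρ) j, hxx.symm⟩
  choose! r hr1 hr2 using hrepex
  -- interval map
  set J := ⌈(N:ℝ)/(Sc:ℝ)⌉₊ with hJdef
  have hJge : (N:ℝ)/(Sc:ℝ) ≤ (J:ℝ) := Nat.le_ceil _
  have hNdivSc1 : (1:ℝ) ≤ (N:ℝ)/(Sc:ℝ) := by rw [le_div_iff₀ hScR]; linarith
  have hJpos : 0 < J := by exact_mod_cast lt_of_lt_of_le (lt_of_lt_of_le one_pos hNdivSc1) hJge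
  have hJR : (0:ℝ) < (J:ℝ) := by exact_mod_cast hJpos
  have hJle : (J : ℝ) ≤ 2*((N:ℝ)/(Sc:ℝ)) := by
    have h1 : (J : ℝ) < (N:ℝ)/(Sc:ℝ) + 1 := Nat.ceil_lt_add_one (by positivity)
    linarith
  set ι : ℤ → ℕ := fun x => ⌊Int.fract ((x:ℝ)*α) * (J:ℝ)⌋₊ with hιdef
  have hιmap : ∀ x ∈ A, ι x ∈ Finset.range J := by
    intro x _
    rw [Finset.mem_range, hιdef]
    have h1 : Int.fract ((x:ℝ)*α) * (J:ℝ) < 1 * (J:ℝ) :=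
      mul_lt_mul_of_pos_right (Int.fract_lt_one _) hJR
    rw [Nat.floor_lt (mul_nonneg (Int.fract_nonneg _) (le_of_lt hJR))]
    linarith
  set P₁ := (A ×ˢ A).filter fun q : ℤ × ℤ => q.1 ≠ q.2 ∧ ι q.1 = ι q.2 with hP₁def
  have hP₁low : C^2*(N:ℝ)*(Sc:ℝ)/2 - (N:ℝ) ≤ (P₁.card : ℝ) := by
    have hpl := pair_lower A ι (Finset.range J) (by simpa using hJpos) hιmap P₁
      (fun q hq1 hq2 hqne hqι => by
        rw [hP₁def, Finset.mem_filter, Finset.mem_product]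
        exact ⟨⟨hq1, hq2⟩, hqne, hqι⟩)
    have hcr : ((Finset.range J).card : ℝ) = (J:ℝ) := by simp
    rw [hcr] at hpl
    have hnum : (C*(N:ℝ))^2 ≤ (A.card:ℝ)^2 :=
      pow_le_pow_left₀ (by positivity) hAcard 2
    have hdl : (C*(N:ℝ))^2 / (2*((N:ℝ)/(Sc:ℝ))) ≤ (A.card:ℝ)^2 / (J:ℝ) := by
      calc (C*(N:ℝ))^2 / (2*((N:ℝ)/(Sc:ℝ))) ≤ (A.card:ℝ)^2 / (2*((N:ℝ)/(Sc:ℝ))) := by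
            gcongr
        _ ≤ (A.card:ℝ)^2 / (J:ℝ) := by
            rw [div_le_div_iff₀ (by positivity) hJR]
            exact mul_le_mul_of_nonneg_left hJle (by positivity)
    have heq : (C*(N:ℝ))^2 / (2*((N:ℝ)/(Sc:ℝ))) = C^2*(N:ℝ)*(Sc:ℝ)/2 := by
      field_simp
    rw [heq] at hdl
    linarith
  have hsmall : ∀ q ∈ P₁, nint (((q.1 - q.2 : ℤ):ℝ) * α) ≤ (Sc:ℝ)/(N:ℝ) := by
    intro q hq
    rw [hP₁def, Finset.mem_filter] at hq
    obtain ⟨_, _, hι_eq⟩ := hq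
    have hfr : |Int.fract ((q.1:ℝ)*α) - Int.fract ((q.2:ℝ)*α)| < 1/(J:ℝ) :=
      floor_close hJR (Int.fract_nonneg _) (Int.fract_nonneg _) hι_eq
    have key : Int.fract ((q.1:ℝ)*α) - Int.fract ((q.2:ℝ)*α)
        = ((q.1 - q.2 : ℤ):ℝ)*α + ((⌊(q.2:ℝ)*α⌋ - ⌊(q.1:ℝ)*α⌋ : ℤ):ℝ) := by
      simp only [Int.fract]; push_cast; ring
    have h1 : nint (((q.1 - q.2 : ℤ):ℝ)*α) ≤ 1/(J:ℝ) := by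
      have e : nint (Int.fract ((q.1:ℝ)*α) - Int.fract ((q.2:ℝ)*α))
          = nint (((q.1 - q.2 : ℤ):ℝ)*α) := by rw [key, nint_add_int]
      have h2 := nint_le_abs (Int.fract ((q.1:ℝ)*α) - Int.fract ((q.2:ℝ)*α))
      rw [e] at h2
      linarith
    have h3 : 1/(J:ℝ) ≤ (Sc:ℝ)/(N:ℝ) := by
      calc 1/(J:ℝ) ≤ 1/((N:ℝ)/(Sc:ℝ)) := one_div_le_one_div_of_le (by positivity) hJge
        _ = (Sc:ℝ)/(N:ℝ) := one_div_div _ _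
    linarith
  have hmemA : ∀ q ∈ P₁, q.1 ∈ A ∧ q.2 ∈ A := by
    intro q hq
    rw [hP₁def, Finset.mem_filter, Finset.mem_product] at hq
    exact hq.1
  set Δ : ℤ × ℤ → (Fin d → ℤ) := fun q => fun j => (r q.1 j : ℤ) - (r q.2 j : ℤ) with hΔdef
  have hΔsum : ∀ q ∈ P₁, q.1 - q.2 = ∑ j, (Δ q) j * k j := by
    intro q hq
    obtain ⟨h1, h2⟩ := hmemA q hq
    have e1 := hr2 q.1 h1
    have e2 := hr2 q.2 h2
    have : ∑ j, (Δ q) j * k j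
        = (∑ j, ((r q.1 j : ℤ)) * k j) - ∑ j, ((r q.2 j : ℤ)) * k j := by
      rw [← Finset.sum_sub_distrib]
      exact Finset.sum_congr rfl fun j _ => by rw [hΔdef]; ring
    rw [this]
    linear_combination e1 - e2
  by_cases hbig : ∃ δ₀ ∈ P₁.image Δ, ((N:ℝ)/(T'':ℝ)) ≤ ((P₁.filter fun q => Δ q = δ₀).card : ℝ)
  · -- popular difference directly
    obtain ⟨δ₀, hδ₀m, hδ₀c⟩ := hbig
    obtain ⟨q₀, hq₀, hΔq₀⟩ := Finset.mem_image.mp hδ₀m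
    refine ⟨q₀.1 - q₀.2, ?_, ?_, ?_⟩
    · have := (Finset.mem_filter.mp hq₀).2.1
      exact sub_ne_zero_of_ne this
    · have h1 := hsmall q₀ hq₀
      have h2 : (Sc:ℝ)/(N:ℝ) ≤ (2*(Sc:ℝ)*(T'':ℝ))/(N:ℝ) := by gcongr; nlinarith
      have h3 : ((q₀.1 - q₀.2 : ℤ):ℝ) = ((q₀.1:ℝ) - q₀.2) := by push_cast; ring
      calc nint (((q₀.1 - q₀.2 : ℤ):ℝ) * α) ≤ (Sc:ℝ)/(N:ℝ) := h1
        _ ≤ (2*(Sc:ℝ)*(T'':ℝ))/(N:ℝ) := h2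
    · have hsub : (P₁.filter fun q => Δ q = δ₀) ⊆
          ((A ×ˢ A).filter fun q : ℤ × ℤ => q.1 - q.2 = q₀.1 - q₀.2) := by
        intro q hq
        rw [Finset.mem_filter] at hq
        obtain ⟨hqP, hqΔ⟩ := hq
        rw [Finset.mem_filter]
        refine ⟨Finset.mem_product.mpr (hmemA q hqP), ?_⟩
        rw [hΔsum q hqP, hqΔ, ← hΔq₀, ← hΔsum q₀ hq₀]
      calc (N:ℝ)/(T'':ℝ) ≤ ((P₁.filter fun q => Δ q = δ₀).card : ℝ) := hδ₀c
        _ ≤ _ := by exact_mod_cast Finset.card_le_card hsub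
  · -- no popular fiber: many distinct difference vectors
    push_neg at hbig
    set Dimg := P₁.image Δ with hDimgdef
    have hfib : P₁.card = ∑ δ ∈ Dimg, (P₁.filter fun q => Δ q = δ).card :=
      Finset.card_eq_sum_card_fiberwise fun q hq => Finset.mem_image_of_mem _ hq
    have hP₁posR : (0:ℝ) < (P₁.card : ℝ) := by
      have hX : (0:ℝ) < ((T:ℝ)^d + 1) / (T'':ℝ) := by positivity
      have hCSc : ((T:ℝ)^d + 1) / (T'':ℝ) + 1 ≤ C^2*(Sc:ℝ)/2 := by
        have h0 := mul_le_mul_of_nonneg_left hSc (le_of_lt (by positivity : (0:ℝ) < C^2/2))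
        have : (C^2/2) * ((2 / C ^ 2) * (((T : ℝ) ^ d + 1) / (T'':ℝ) + 1))
            = ((T:ℝ)^d + 1) / (T'':ℝ) + 1 := by field_simp
        rw [this] at h0; linarith [h0]
      have h1 : (((T:ℝ)^d + 1) / (T'':ℝ) + 1) * (N:ℝ) ≤ (C^2*(Sc:ℝ)/2) * (N:ℝ) :=
        mul_le_mul_of_nonneg_right hCSc (le_of_lt hNR)
      have h2 : (0:ℝ) < (((T:ℝ)^d + 1) / (T'':ℝ)) * (N:ℝ) := mul_pos hX hNR
      nlinarith [hP₁low]
    have hP₁lowμ : ((T:ℝ)^d + 1) * ((N:ℝ)/(T'':ℝ)) ≤ (P₁.card : ℝ) := by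
      have hCSc : ((T:ℝ)^d + 1) / (T'':ℝ) + 1 ≤ C^2*(Sc:ℝ)/2 := by
        have h0 := mul_le_mul_of_nonneg_left hSc (le_of_lt (by positivity : (0:ℝ) < C^2/2))
        have : (C^2/2) * ((2 / C ^ 2) * (((T : ℝ) ^ d + 1) / (T'':ℝ) + 1))
            = ((T:ℝ)^d + 1) / (T'':ℝ) + 1 := by field_simp
        rw [this] at h0; linarith [h0]
      have e1 : ((T:ℝ)^d + 1) * ((N:ℝ)/(T'':ℝ)) = (((T:ℝ)^d + 1)/(T'':ℝ)) * (N:ℝ) := by ring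
      have e2 : (((T:ℝ)^d + 1)/(T'':ℝ)) * (N:ℝ) ≤ (C^2*(Sc:ℝ)/2 - 1) * (N:ℝ) := by
        apply mul_le_mul_of_nonneg_right ?_ (le_of_lt hNR)
        linarith
      calc ((T:ℝ)^d + 1) * ((N:ℝ)/(T'':ℝ)) = (((T:ℝ)^d + 1)/(T'':ℝ)) * (N:ℝ) := e1
        _ ≤ (C^2*(Sc:ℝ)/2 - 1) * (N:ℝ) := e2
        _ = C^2*(N:ℝ)*(Sc:ℝ)/2 - (N:ℝ) := by ring
        _ ≤ (P₁.card : ℝ) := hP₁low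
    have hDne : Dimg.Nonempty := by
      rw [Finset.nonempty_iff_ne_empty]
      intro hemp
      rw [hDimgdef] at hemp
      have : P₁.card = 0 := by
        rw [hfib, hDimgdef, hemp, Finset.sum_empty]
      rw [this] at hP₁posR; norm_num at hP₁posR
    have hstrict : (P₁.card : ℝ) < (Dimg.card : ℝ) * ((N:ℝ)/(T'':ℝ)) := by
      have : (P₁.card : ℝ) = ∑ δ ∈ Dimg, ((P₁.filter fun q => Δ q = δ).card : ℝ) := by
        exact_mod_cast congrArg (fun n : ℕ => (n:ℝ)) hfib
      rw [this]
      calc ∑ δ ∈ Dimg, ((P₁.filter fun q => Δ q = δ).card : ℝ)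
          < ∑ _δ ∈ Dimg, ((N:ℝ)/(T'':ℝ)) :=
            Finset.sum_lt_sum_of_nonempty hDne fun δ hδ => hbig δ hδ
        _ = (Dimg.card : ℝ) * ((N:ℝ)/(T'':ℝ)) := by rw [Finset.sum_const, nsmul_eq_mul]
    have himgR : ((T:ℝ)^d + 1) ≤ (Dimg.card : ℝ) := by
      have hμpos : (0:ℝ) < (N:ℝ)/(T'':ℝ) := by positivity
      have := lt_of_le_of_lt hP₁lowμ hstrict
      have := (mul_lt_mul_iff_of_pos_right hμpos).mp this
      linarith
    have himg : T^d < Dimg.card := by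
      have : ((T^d : ℕ) : ℝ) < (Dimg.card : ℝ) := by push_cast; linarith
      exact_mod_cast this
    -- cell pigeonhole on difference vectors
    set cell : (Fin d → ℤ) → (Fin d → ℕ) :=
      fun δ => fun j => ⌊(((δ j + (s j : ℤ)) : ℤ):ℝ) / (2 * (s j : ℝ)) * (T:ℝ)⌋₊ with hcelldef
    have hδbound : ∀ δ ∈ Dimg, ∀ j, 1 ≤ δ j + (s j:ℤ) ∧ δ j + (s j:ℤ) ≤ 2*(s j:ℤ) - 1 := by
      intro δ hδ j
      obtain ⟨q, hq, hΔq⟩ := Finset.mem_image.mp hδ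
      obtain ⟨h1, h2⟩ := hmemA q hq
      have b1 : r q.1 j < s j := hr1 q.1 h1 j
      have b2 : r q.2 j < s j := hr1 q.2 h2 j
      have e : δ j = (r q.1 j : ℤ) - (r q.2 j : ℤ) := by
        simp only [← hΔq, hΔdef]
      rw [e]
      omega
    have hmapsto : ∀ δ ∈ Dimg, cell δ ∈ Fintype.piFinset (fun _ : Fin d => Finset.range T) := by
      intro δ hδ
      rw [Fintype.mem_piFinset]
      intro j
      rw [Finset.mem_range, hcelldef]
      obtain ⟨b1, b2⟩ := hδbound δ hδ j
      have hsj : (0:ℝ) < (s j : ℝ) := by exact_mod_cast hs j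
      have hu0 : (0:ℝ) ≤ ((δ j + (s j:ℤ) : ℤ):ℝ) / (2 * (s j:ℝ)) := by
        apply div_nonneg ?_ (by positivity)
        exact_mod_cast le_trans (by norm_num) b1
      have hu1 : ((δ j + (s j:ℤ) : ℤ):ℝ) / (2 * (s j:ℝ)) < 1 := by
        rw [div_lt_one (by positivity)]
        have : ((δ j + (s j:ℤ) : ℤ):ℝ) ≤ 2*(s j:ℝ) - 1 := by exact_mod_cast b2
        linarith
      rw [Nat.floor_lt (by positivity)]
      calc ((δ j + (s j:ℤ) : ℤ):ℝ) / (2 * (s j:ℝ)) * (T:ℝ) < 1 * (T:ℝ) :=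
        mul_lt_mul_of_pos_right hu1 hTR
        _ = (T:ℝ) := one_mul _
    have hpicard : (Fintype.piFinset (fun _ : Fin d => Finset.range T)).card < Dimg.card := by
      rw [Fintype.card_piFinset]
      simpa using himg
    obtain ⟨δ₁, hδ₁, δ₂, hδ₂, hne12, hcelleq⟩ :=
      Finset.exists_ne_map_eq_of_card_lt_of_maps_to hpicard hmapsto
    set η : Fin d → ℤ := fun j => δ₁ j - δ₂ j with hηdef
    have hηne : ∃ j, η j ≠ 0 := by
      by_contra hc
      push_neg at hc
      refine hne12 (funext fun j => ?_)
      have := hc j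
      simp only [hηdef] at this
      omega
    have hηb : ∀ j, |((η j : ℤ):ℝ)| < 2 * (s j:ℝ) / (T:ℝ) := by
      intro j
      have hsj : (0:ℝ) < (s j : ℝ) := by exact_mod_cast hs j
      have hc1 := hδbound δ₁ hδ₁ j
      have hc2 := hδbound δ₂ hδ₂ j
      have hu0 : (0:ℝ) ≤ ((δ₁ j + (s j:ℤ) : ℤ):ℝ) / (2 * (s j:ℝ)) :=
        div_nonneg (by exact_mod_cast le_trans (by norm_num) hc1.1) (by positivity)
      have hv0 : (0:ℝ) ≤ ((δ₂ j + (s j:ℤ) : ℤ):ℝ) / (2 * (s j:ℝ)) :=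
        div_nonneg (by exact_mod_cast le_trans (by norm_num) hc2.1) (by positivity)
      have hfl : (cell δ₁) j = (cell δ₂) j := by rw [hcelleq]
      simp only [hcelldef] at hfl
      have hcl := floor_close hTR hu0 hv0 hfl
      have hdiff : ((δ₁ j + (s j:ℤ) : ℤ):ℝ) / (2 * (s j:ℝ))
          - ((δ₂ j + (s j:ℤ) : ℤ):ℝ) / (2 * (s j:ℝ)) = ((η j : ℤ):ℝ) / (2 * (s j:ℝ)) := by
        simp only [hηdef]; push_cast; ring
      rw [hdiff] at hcl
      rw [abs_div, abs_of_pos (by positivity : (0:ℝ) < 2*(s j:ℝ))] at hcl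
      have hmul := (div_lt_div_iff₀ (by positivity : (0:ℝ) < 2*(s j:ℝ)) hTR).mp hcl
      rw [lt_div_iff₀ hTR]
      linarith
    -- value of the η-combination
    obtain ⟨qa, hqa, hΔqa⟩ := Finset.mem_image.mp hδ₁
    obtain ⟨qb, hqb, hΔqb⟩ := Finset.mem_image.mp hδ₂
    have hmηval : nint ((((∑ j, η j * k j) : ℤ):ℝ) * α) ≤ 2*(Sc:ℝ)/(N:ℝ) := by
      have hsum : (∑ j, η j * k j) = (qa.1 - qa.2) - (qb.1 - qb.2) := by
        rw [hΔsum qa hqa, hΔsum qb hqb, ← Finset.sum_sub_distrib]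
        refine Finset.sum_congr rfl fun j _ => ?_
        have e1 : Δ qa j = δ₁ j := by rw [hΔqa]
        have e2 : Δ qb j = δ₂ j := by rw [hΔqb]
        rw [e1, e2]
        simp only [hηdef]
        ring
      rw [hsum]
      have hcast : ((((qa.1 - qa.2) - (qb.1 - qb.2) : ℤ)):ℝ) * α
          = ((qa.1 - qa.2 : ℤ):ℝ) * α - ((qb.1 - qb.2 : ℤ):ℝ) * α := by push_cast; ring
      rw [hcast]
      calc nint (((qa.1 - qa.2 : ℤ):ℝ) * α - ((qb.1 - qb.2 : ℤ):ℝ) * α)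
          ≤ nint (((qa.1 - qa.2 : ℤ):ℝ) * α) + nint (((qb.1 - qb.2 : ℤ):ℝ) * α) :=
            nint_sub_le _ _
        _ ≤ (Sc:ℝ)/(N:ℝ) + (Sc:ℝ)/(N:ℝ) := add_le_add (hsmall qa hqa) (hsmall qb hqb)
        _ = 2*(Sc:ℝ)/(N:ℝ) := by ring
    -- the image of A in index space
    set toInt : (Fin d → ℤ) → ℤ := fun ρ => h + ∑ j, ρ j * k j with htoIntdef
    set R : Finset (Fin d → ℤ) := A.image (fun x => fun j => ((r x j : ℕ) : ℤ)) with hRdef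
    have hRprop : ∀ ρ ∈ R, (∀ j, 0 ≤ ρ j ∧ ρ j ≤ (s j:ℤ) - 1) ∧ toInt ρ ∈ A ∧
        (fun j => ((r (toInt ρ) j : ℕ):ℤ)) = ρ := by
      intro ρ hρ
      obtain ⟨x, hx, hfx⟩ := Finset.mem_image.mp hρ
      have hb : ∀ j, 0 ≤ ρ j ∧ ρ j ≤ (s j:ℤ) - 1 := by
        intro j
        have hρj : ρ j = ((r x j : ℕ) : ℤ) := (congrFun hfx j).symm
        rw [hρj]
        have := hr1 x hx j
        omega
      have hto : toInt ρ = x := by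
        rw [htoIntdef, ← hfx]
        exact (hr2 x hx).symm
      refine ⟨hb, ?_, ?_⟩
      · rw [hto]; exact hx
      · rw [hto, hfx]
    have hRcard : R.card = A.card := by
      rw [hRdef]
      apply Finset.card_image_of_injOn
      intro x hx y hy hxy
      have : ∀ j, (r x j : ℤ) = (r y j : ℤ) := fun j => congrFun hxy j
      have hrj : ∀ j, r x j = r y j := fun j => by exact_mod_cast this j
      rw [hr2 x hx, hr2 y hy]
      congr 1
      exact Finset.sum_congr rfl fun j _ => by rw [hrj j]
    have htoIinj : ∀ ρ ∈ R, ∀ ρ' ∈ R, toInt ρ = toInt ρ' → ρ = ρ' := by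
      intro ρ hρ ρ' hρ' heq
      have h1 := (hRprop ρ hρ).2.2
      have h2 := (hRprop ρ' hρ').2.2
      rw [← h1, ← h2, heq]
    -- the big box
    set cc : Fin d → ℤ := fun j => (T'' : ℤ) * |η j| with hccdef
    have hccnn : ∀ j, 0 ≤ cc j := fun j => by positivity
    set Sbig := Fintype.piFinset (fun j => Finset.Icc (-(cc j)) ((s j : ℤ) - 1 + cc j))
      with hSbigdef
    have hSbigcard : (Sbig.card : ℝ) ≤ 2 * (K * (N:ℝ)) := by
      rw [hSbigdef, Fintype.card_piFinset]
      have hfac : ∀ j : Fin d, ((Finset.Icc (-(cc j)) ((s j : ℤ) - 1 + cc j)).card : ℝ)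
          ≤ (s j : ℝ) * (1 + 1/(2*(d:ℝ))) := by
        intro j
        have hnn : -(cc j) ≤ ((s j : ℤ) - 1 + cc j) + 1 := by
          have := hccnn j
          have := hs j
          omega
        rw [icc_card_real _ _ hnn]
        have hb : (((s j : ℤ) - 1 + cc j : ℤ) : ℝ) - ((-(cc j) : ℤ) : ℝ) + 1
            = (s j : ℝ) + 2 * (T'':ℝ) * |((η j : ℤ):ℝ)| := by
          simp only [hccdef]; push_cast; ring
        rw [hb]
        have hηbj := hηb j
        have hTeq : (T:ℝ) = 8 * (d:ℝ) * (T'':ℝ) := by rw [hT]; push_cast; ring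
        have hdR : (0:ℝ) < (d:ℝ) := by exact_mod_cast hd
        have hstep : 2 * (T'':ℝ) * |((η j : ℤ):ℝ)| ≤ (s j : ℝ) * (1/(2*(d:ℝ))) := by
          have h1 : 2 * (T'':ℝ) * |((η j : ℤ):ℝ)| ≤ 2 * (T'':ℝ) * (2 * (s j:ℝ) / (T:ℝ)) := by
            apply mul_le_mul_of_nonneg_left (le_of_lt hηbj) (by positivity)
          have h2 : 2 * (T'':ℝ) * (2 * (s j:ℝ) / (T:ℝ)) = (s j : ℝ) * (1/(2*(d:ℝ))) := by
            rw [hTeq]; field_simp; ring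
          linarith
        linarith
      calc (((∏ j, (Finset.Icc (-(cc j)) ((s j : ℤ) - 1 + cc j)).card : ℕ)) : ℝ)
          = ∏ j, (((Finset.Icc (-(cc j)) ((s j : ℤ) - 1 + cc j)).card : ℕ) : ℝ) := by
            push_cast; rfl
        _ ≤ ∏ j, ((s j : ℝ) * (1 + 1/(2*(d:ℝ)))) := by
            apply Finset.prod_le_prod (fun j _ => Nat.cast_nonneg _) (fun j _ => hfac j)
        _ = (∏ j, (s j : ℝ)) * ((1 + 1/(2*(d:ℝ)))^d) := by
            rw [Finset.prod_mul_distrib, Finset.prod_const]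
            congr 2
            simp
        _ ≤ (K * (N:ℝ)) * 2 := by
            apply mul_le_mul ?_ (pow_bound d hd) (by positivity) (by positivity)
            calc (∏ j, (s j : ℝ)) = ((∏ j, s j : ℕ) : ℝ) := by push_cast; rfl
              _ ≤ K * (N:ℝ) := hM
        _ = 2 * (K * (N:ℝ)) := by ring
    -- the counting function
    set Hcnt : (Fin d → ℤ) → ℕ :=
      fun x => ((Finset.range T'').filter fun t : ℕ => (fun j => x j - (t:ℤ) * η j) ∈ R).card
      with hHdef
    have htransmem : ∀ t : ℕ, t < T'' → ∀ ρ ∈ R, (fun j => ρ j + (t:ℤ) * η j) ∈ Sbig := by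
      intro t ht ρ hρ
      rw [hSbigdef, Fintype.mem_piFinset]
      intro j
      rw [Finset.mem_Icc]
      obtain ⟨hb, _, _⟩ := hRprop ρ hρ
      obtain ⟨hb1, hb2⟩ := hb j
      have ht0 : (0:ℤ) ≤ (t:ℤ) := by positivity
      have habs1 : -((t:ℤ) * |η j|) ≤ (t:ℤ) * η j := by
        have := mul_le_mul_of_nonneg_left (neg_abs_le (η j)) ht0
        linarith
      have habs2 : (t:ℤ) * η j ≤ (t:ℤ) * |η j| := by
        exact mul_le_mul_of_nonneg_left (le_abs_self (η j)) ht0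
      have htcc : (t:ℤ) * |η j| ≤ cc j := by
        rw [hccdef]
        apply mul_le_mul_of_nonneg_right ?_ (abs_nonneg _)
        omega
      constructor <;> linarith
    have hone : ∀ t ∈ Finset.range T'',
        (Sbig.filter fun x => (fun j => x j - (t:ℤ) * η j) ∈ R).card = A.card := by
      intro t ht
      rw [Finset.mem_range] at ht
      have himg2 : Sbig.filter (fun x => (fun j => x j - (t:ℤ) * η j) ∈ R)
          = R.image (fun ρ => fun j => ρ j + (t:ℤ) * η j) := by
        ext z
        simp only [Finset.mem_filter, Finset.mem_image]
        constructor
        · rintro ⟨hzS, hzR⟩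
          refine ⟨fun j => z j - (t:ℤ) * η j, hzR, ?_⟩
          funext j
          show z j - (t:ℤ) * η j + (t:ℤ) * η j = z j
          ring
        · rintro ⟨ρ, hρ, hz⟩
          constructor
          · rw [← hz]; exact htransmem t ht ρ hρ
          · have : (fun j => z j - (t:ℤ) * η j) = ρ := by
              funext j
              have hzz : ρ j + (t:ℤ) * η j = z j := congrFun hz j
              show z j - (t:ℤ) * η j = ρ j
              linarith
            rw [this]; exact hρ
      have hinj : Function.Injective (fun ρ : Fin d → ℤ => fun j => ρ j + (t:ℤ) * η j) := by
        intro p1 p2 h12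
        funext j
        have hzz : p1 j + (t:ℤ) * η j = p2 j + (t:ℤ) * η j := congrFun h12 j
        linarith
      rw [himg2, Finset.card_image_of_injective _ hinj, hRcard]
    have hHsum : ∑ x ∈ Sbig, Hcnt x = T'' * A.card := by
      calc ∑ x ∈ Sbig, Hcnt x
          = ∑ x ∈ Sbig, ∑ t ∈ Finset.range T'',
              (if (fun j => x j - (t:ℤ) * η j) ∈ R then 1 else 0) :=
            Finset.sum_congr rfl (fun x _ => by
              simp only [hHdef, Finset.card_filter])
        _ = ∑ t ∈ Finset.range T'', ∑ x ∈ Sbig,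
              (if (fun j => x j - (t:ℤ) * η j) ∈ R then 1 else 0) := Finset.sum_comm
        _ = ∑ t ∈ Finset.range T'',
              (Sbig.filter fun x => (fun j => x j - (t:ℤ) * η j) ∈ R).card :=
            Finset.sum_congr rfl (fun t _ => (Finset.card_filter _ _).symm)
        _ = ∑ _t ∈ Finset.range T'', A.card := Finset.sum_congr rfl hone
        _ = T'' * A.card := by rw [Finset.sum_const, Finset.card_range, smul_eq_mul]
    have hHsq : ∑ x ∈ Sbig, (Hcnt x)^2
        ≤ ∑ p ∈ Finset.range T'' ×ˢ Finset.range T'',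
            (R.filter fun ρ => (fun j => ρ j + ((p.1:ℤ) - (p.2:ℤ)) * η j) ∈ R).card := by
      have hsq : ∀ x ∈ Sbig, (Hcnt x)^2
          = ((Finset.range T'' ×ˢ Finset.range T'').filter fun p : ℕ × ℕ =>
              ((fun j => x j - (p.1:ℤ) * η j) ∈ R) ∧ ((fun j => x j - (p.2:ℤ) * η j) ∈ R)).card := by
        intro x _
        have hset : ((Finset.range T'' ×ˢ Finset.range T'').filter fun p : ℕ × ℕ =>
              ((fun j => x j - (p.1:ℤ) * η j) ∈ R) ∧ ((fun j => x j - (p.2:ℤ) * η j) ∈ R))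
            = ((Finset.range T'').filter fun t : ℕ => (fun j => x j - (t:ℤ) * η j) ∈ R)
              ×ˢ ((Finset.range T'').filter fun t : ℕ => (fun j => x j - (t:ℤ) * η j) ∈ R) := by
          ext p
          simp only [Finset.mem_filter, Finset.mem_product]
          tauto
        calc (Hcnt x)^2 = Hcnt x * Hcnt x := pow_two _
          _ = (((Finset.range T'').filter fun t : ℕ => (fun j => x j - (t:ℤ) * η j) ∈ R)
              ×ˢ ((Finset.range T'').filter fun t : ℕ => (fun j => x j - (t:ℤ) * η j) ∈ R)).card := by
                rw [Finset.card_product]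
          _ = _ := (congrArg Finset.card hset).symm
      rw [Finset.sum_congr rfl hsq]
      have hswap : ∑ x ∈ Sbig,
          ((Finset.range T'' ×ˢ Finset.range T'').filter fun p : ℕ × ℕ =>
              ((fun j => x j - (p.1:ℤ) * η j) ∈ R) ∧ ((fun j => x j - (p.2:ℤ) * η j) ∈ R)).card
          = ∑ p ∈ Finset.range T'' ×ˢ Finset.range T'',
              (Sbig.filter fun x =>
                ((fun j => x j - (p.1:ℤ) * η j) ∈ R) ∧ ((fun j => x j - (p.2:ℤ) * η j) ∈ R)).card := by
        simp only [Finset.card_filter]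
        rw [Finset.sum_comm]
      rw [hswap]
      apply Finset.sum_le_sum
      intro p _
      apply Finset.card_le_card_of_injOn (fun x => fun j => x j - (p.1:ℤ) * η j)
      · intro x hx
        rw [Finset.mem_coe, Finset.mem_filter] at hx ⊢
        obtain ⟨_, hx1, hx2⟩ := hx
        refine ⟨hx1, ?_⟩
        have : (fun j => (x j - (p.1:ℤ) * η j) + ((p.1:ℤ) - (p.2:ℤ)) * η j)
            = fun j => x j - (p.2:ℤ) * η j := by funext j; ring
        rw [this]; exact hx2
      · intro x _ y _ hxy
        funext j
        have hzz : x j - (p.1:ℤ) * η j = y j - (p.1:ℤ) * η j := congrFun hxy j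
        linarith
    have hCS2 : ((T'':ℝ) * (A.card:ℝ))^2 ≤ (Sbig.card : ℝ) * ∑ x ∈ Sbig, ((Hcnt x : ℝ))^2 := by
      have := Finset.sum_mul_sq_le_sq_mul_sq Sbig (fun _ => (1:ℝ)) (fun x => (Hcnt x : ℝ))
      simp only [one_pow, one_mul] at this
      have e1 : ∑ x ∈ Sbig, ((Hcnt x : ℝ)) = (T'':ℝ) * (A.card:ℝ) := by
        rw [← Nat.cast_sum, hHsum]; push_cast; ring
      have e2 : ∑ _x ∈ Sbig, (1:ℝ) = (Sbig.card : ℝ) := by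
        rw [Finset.sum_const, nsmul_eq_mul]; ring
      rw [e1, e2] at this
      exact this
    -- find the popular shift j₀
    have hfind : ∃ j₀ : ℤ, j₀ ≠ 0 ∧ |j₀| ≤ (T'':ℤ) ∧
        ((N:ℝ)/(T'':ℝ)) ≤ ((R.filter fun ρ => (fun j => ρ j + j₀ * η j) ∈ R).card : ℝ) := by
      by_contra hcon
      push_neg at hcon
      -- upper bound for the double sum
      set Dg := (Finset.range T'' ×ˢ Finset.range T'').filter (fun p : ℕ × ℕ => p.1 = p.2)
        with hDgdef
      set Og := (Finset.range T'' ×ˢ Finset.range T'').filter (fun p : ℕ × ℕ => ¬ p.1 = p.2)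
        with hOgdef
      have hupper : (∑ p ∈ Finset.range T'' ×ˢ Finset.range T'',
          ((R.filter fun ρ => (fun j => ρ j + ((p.1:ℤ) - (p.2:ℤ)) * η j) ∈ R).card : ℝ))
          ≤ 2 * (T'':ℝ) * (N:ℝ) := by
        rw [← Finset.sum_filter_add_sum_filter_not (Finset.range T'' ×ˢ Finset.range T'')
          (fun p : ℕ × ℕ => p.1 = p.2), ← hDgdef, ← hOgdef]
        have hdiag : ∑ p ∈ Dg,
            ((R.filter fun ρ => (fun j => ρ j + ((p.1:ℤ) - (p.2:ℤ)) * η j) ∈ R).card : ℝ)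
            ≤ (T'':ℝ) * (N:ℝ) := by
          have hterm : ∀ p ∈ Dg,
              ((R.filter fun ρ => (fun j => ρ j + ((p.1:ℤ) - (p.2:ℤ)) * η j) ∈ R).card : ℝ)
              ≤ (N:ℝ) := by
            intro p hp
            have hp12 : p.1 = p.2 := (Finset.mem_filter.mp hp).2
            calc ((R.filter fun ρ => (fun j => ρ j + ((p.1:ℤ) - (p.2:ℤ)) * η j) ∈ R).card : ℝ)
                ≤ (R.card : ℝ) := by exact_mod_cast Finset.card_le_card (Finset.filter_subset _ _)
              _ ≤ (N:ℝ) := by rw [hRcard]; exact hANR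
          calc ∑ p ∈ Dg,
              ((R.filter fun ρ => (fun j => ρ j + ((p.1:ℤ) - (p.2:ℤ)) * η j) ∈ R).card : ℝ)
              ≤ ∑ _p ∈ Dg, (N:ℝ) := Finset.sum_le_sum hterm
            _ = (Dg.card : ℝ) * (N:ℝ) := by rw [Finset.sum_const, nsmul_eq_mul]
            _ = (T'':ℝ) * (N:ℝ) := by rw [hDgdef, diag_card_range]
        have hoff : ∑ p ∈ Og,
            ((R.filter fun ρ => (fun j => ρ j + ((p.1:ℤ) - (p.2:ℤ)) * η j) ∈ R).card : ℝ)
            ≤ (T'':ℝ) * (N:ℝ) := by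
          have hterm : ∀ p ∈ Og,
              ((R.filter fun ρ => (fun j => ρ j + ((p.1:ℤ) - (p.2:ℤ)) * η j) ∈ R).card : ℝ)
              ≤ (N:ℝ)/(T'':ℝ) := by
            intro p hp
            simp only [hOgdef, Finset.mem_filter, Finset.mem_product, Finset.mem_range] at hp
            obtain ⟨⟨hp1, hp2⟩, hpne⟩ := hp
            have hne : ((p.1:ℤ) - (p.2:ℤ)) ≠ 0 := by
              refine sub_ne_zero.mpr ?_
              exact_mod_cast hpne
            have hc1 : ((p.1:ℕ):ℤ) ≤ (T'':ℤ) := by exact_mod_cast le_of_lt hp1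
            have hc2 : ((p.2:ℕ):ℤ) ≤ (T'':ℤ) := by exact_mod_cast le_of_lt hp2
            have hc3 : (0:ℤ) ≤ ((p.1:ℕ):ℤ) := Int.natCast_nonneg _
            have hc4 : (0:ℤ) ≤ ((p.2:ℕ):ℤ) := Int.natCast_nonneg _
            have habs : |(p.1:ℤ) - (p.2:ℤ)| ≤ (T'':ℤ) := by
              rw [abs_le]; constructor <;> linarith
            exact le_of_lt (hcon _ hne habs)
          have hOgcard : (Og.card : ℝ) ≤ (T'':ℝ) * (T'':ℝ) := by
            have := Finset.card_le_card (Finset.filter_subset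
              (fun p : ℕ × ℕ => ¬ p.1 = p.2) (Finset.range T'' ×ˢ Finset.range T''))
            rw [Finset.card_product, Finset.card_range] at this
            rw [hOgdef]
            calc (((Finset.range T'' ×ˢ Finset.range T'').filter
                (fun p : ℕ × ℕ => ¬ p.1 = p.2)).card : ℝ) ≤ ((T'' * T'' : ℕ) : ℝ) := by
                  exact_mod_cast this
              _ = (T'':ℝ) * (T'':ℝ) := by push_cast; ring
          calc ∑ p ∈ Og,
              ((R.filter fun ρ => (fun j => ρ j + ((p.1:ℤ) - (p.2:ℤ)) * η j) ∈ R).card : ℝ)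
              ≤ ∑ _p ∈ Og, (N:ℝ)/(T'':ℝ) := Finset.sum_le_sum hterm
            _ = (Og.card : ℝ) * ((N:ℝ)/(T'':ℝ)) := by rw [Finset.sum_const, nsmul_eq_mul]
            _ ≤ ((T'':ℝ) * (T'':ℝ)) * ((N:ℝ)/(T'':ℝ)) := by
                apply mul_le_mul_of_nonneg_right hOgcard (by positivity)
            _ = (T'':ℝ) * (N:ℝ) := by field_simp
        linarith
      -- lower bound for the double sum
      have hlower : 4 * (T'':ℝ) * (N:ℝ) ≤ ∑ p ∈ Finset.range T'' ×ˢ Finset.range T'',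
          ((R.filter fun ρ => (fun j => ρ j + ((p.1:ℤ) - (p.2:ℤ)) * η j) ∈ R).card : ℝ) := by
        have hsum2 : (∑ x ∈ Sbig, ((Hcnt x : ℝ))^2)
            ≤ ∑ p ∈ Finset.range T'' ×ˢ Finset.range T'',
              ((R.filter fun ρ => (fun j => ρ j + ((p.1:ℤ) - (p.2:ℤ)) * η j) ∈ R).card : ℝ) := by
          exact_mod_cast hHsq
        have hT''C2 : 8 * K ≤ (T'':ℝ) * C^2 := by
          rw [div_le_iff₀ hC2] at hT''
          linarith
        have hKR : (0:ℝ) < K := lt_of_lt_of_le one_pos hK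
        -- (T'' L)^2 ≥ T''^2 C^2 N^2 ;  Sbig.card ≤ 2KN
        have hq1 : ((T'':ℝ) * (C * (N:ℝ)))^2 ≤ ((T'':ℝ) * (A.card:ℝ))^2 := by
          apply pow_le_pow_left₀ (by positivity)
          apply mul_le_mul_of_nonneg_left hAcard (by positivity)
        have hq2 : ((T'':ℝ) * (C * (N:ℝ)))^2 ≤ (2 * (K * (N:ℝ))) *
            ∑ p ∈ Finset.range T'' ×ˢ Finset.range T'',
              ((R.filter fun ρ => (fun j => ρ j + ((p.1:ℤ) - (p.2:ℤ)) * η j) ∈ R).card : ℝ) := by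
          calc ((T'':ℝ) * (C * (N:ℝ)))^2 ≤ ((T'':ℝ) * (A.card:ℝ))^2 := hq1
            _ ≤ (Sbig.card : ℝ) * ∑ x ∈ Sbig, ((Hcnt x : ℝ))^2 := hCS2
            _ ≤ (2 * (K * (N:ℝ))) * ∑ x ∈ Sbig, ((Hcnt x : ℝ))^2 := by
                apply mul_le_mul_of_nonneg_right hSbigcard
                apply Finset.sum_nonneg; intro x _; exact sq_nonneg _
            _ ≤ (2 * (K * (N:ℝ))) * ∑ p ∈ Finset.range T'' ×ˢ Finset.range T'',
              ((R.filter fun ρ => (fun j => ρ j + ((p.1:ℤ) - (p.2:ℤ)) * η j) ∈ R).card : ℝ) := by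
                apply mul_le_mul_of_nonneg_left hsum2 (by positivity)
        have hexp : 4 * (T'':ℝ) * (N:ℝ) * (2 * (K * (N:ℝ))) ≤ ((T'':ℝ) * (C * (N:ℝ)))^2 := by
          have : ((T'':ℝ) * (C * (N:ℝ)))^2 = (T'':ℝ) * ((T'':ℝ) * C^2) * (N:ℝ)^2 := by ring
          rw [this]
          have h8 : 8 * K * (T'':ℝ) * (N:ℝ)^2 ≤ (T'':ℝ) * ((T'':ℝ) * C^2) * (N:ℝ)^2 := by
            have := mul_le_mul_of_nonneg_right hT''C2
              (by positivity : (0:ℝ) ≤ (T'':ℝ) * (N:ℝ)^2)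
            nlinarith [this]
          nlinarith
        have hpos2 : (0:ℝ) < 2 * (K * (N:ℝ)) := by positivity
        nlinarith [hq2, hexp, hpos2]
      linarith [hupper, hlower, mul_pos (mul_pos (by norm_num : (0:ℝ) < 2) hT''R) hNR]
    obtain ⟨j₀, hj₀ne, hj₀abs, hj₀c⟩ := hfind
    set m₀ : ℤ := ∑ j, (j₀ * η j) * k j with hm₀def
    have hm₀eq : m₀ = j₀ * ∑ j, η j * k j := by
      rw [hm₀def, Finset.mul_sum]
      exact Finset.sum_congr rfl fun j _ => by ring
    -- the pair injection
    have hdiffval : ∀ ρ : Fin d → ℤ, toInt (fun j => ρ j + j₀ * η j) - toInt ρ = m₀ := by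
      intro ρ
      simp only [htoIntdef, hm₀def]
      have e : ∑ j, (ρ j + j₀ * η j) * k j = (∑ j, ρ j * k j) + ∑ j, (j₀ * η j) * k j := by
        rw [← Finset.sum_add_distrib]
        exact Finset.sum_congr rfl fun j _ => by ring
      rw [e]
      ring
    have hpair : (R.filter fun ρ => (fun j => ρ j + j₀ * η j) ∈ R).card
        ≤ ((A ×ˢ A).filter fun q : ℤ × ℤ => q.1 - q.2 = m₀).card := by
      apply Finset.card_le_card_of_injOn
        (fun ρ => (toInt (fun j => ρ j + j₀ * η j), toInt ρ))
      · intro ρ hρ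
        rw [Finset.mem_coe, Finset.mem_filter] at hρ
        obtain ⟨hρR, hρ'R⟩ := hρ
        rw [Finset.mem_coe, Finset.mem_filter, Finset.mem_product]
        exact ⟨⟨(hRprop _ hρ'R).2.1, (hRprop _ hρR).2.1⟩, hdiffval ρ⟩
      · intro ρ1 h1 ρ2 h2 h12
        simp only [Finset.mem_coe, Finset.mem_filter] at h1 h2
        have hsnd : toInt ρ1 = toInt ρ2 := congrArg Prod.snd h12
        exact htoIinj ρ1 h1.1 ρ2 h2.1 hsnd
    have hm₀ne : m₀ ≠ 0 := by
      have hfpos : (0:ℝ) < ((R.filter fun ρ => (fun j => ρ j + j₀ * η j) ∈ R).card : ℝ) :=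
        lt_of_lt_of_le (by positivity) hj₀c
      have hfne : (R.filter fun ρ => (fun j => ρ j + j₀ * η j) ∈ R).Nonempty := by
        rw [← Finset.card_pos]
        exact_mod_cast hfpos
      obtain ⟨ρ, hρ⟩ := hfne
      rw [Finset.mem_filter] at hρ
      obtain ⟨hρR, hρ'R⟩ := hρ
      intro hm0
      have heq : toInt (fun j => ρ j + j₀ * η j) = toInt ρ := by
        have := hdiffval ρ
        rw [hm0] at this
        exact sub_eq_zero.mp this
      have := htoIinj _ hρ'R _ hρR heq
      obtain ⟨jw, hjw⟩ := hηne
      have h5 : ρ jw + j₀ * η jw = ρ jw := congrFun this jw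
      have : j₀ * η jw = 0 := by linarith
      rcases mul_eq_zero.mp this with hc | hc
      · exact hj₀ne hc
      · exact hjw hc
    have hnint : nint ((m₀:ℝ)*α) ≤ (2*(Sc:ℝ)*(T'':ℝ))/(N:ℝ) := by
      rw [hm₀eq]
      have hc : (((j₀ * ∑ j, η j * k j : ℤ)):ℝ) * α
          = (j₀:ℝ) * ((((∑ j, η j * k j : ℤ)):ℝ) * α) := by push_cast; ring
      rw [hc]
      calc nint ((j₀:ℝ) * ((((∑ j, η j * k j : ℤ)):ℝ) * α))
          ≤ |(j₀:ℝ)| * nint ((((∑ j, η j * k j : ℤ)):ℝ) * α) := nint_zsmul_le _ _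
        _ ≤ (T'':ℝ) * (2*(Sc:ℝ)/(N:ℝ)) := by
            apply mul_le_mul ?_ hmηval (nint_nonneg _) (by positivity)
            calc |(j₀:ℝ)| = ((|j₀| : ℤ) : ℝ) := by push_cast; rfl
              _ ≤ ((T'' : ℤ) : ℝ) := by exact_mod_cast hj₀abs
              _ = (T'':ℝ) := by push_cast; rfl
        _ = (2*(Sc:ℝ)*(T'':ℝ))/(N:ℝ) := by field_simp
    exact ⟨m₀, hm₀ne, hnint, le_trans hj₀c (by exact_mod_cast hpair)⟩

end Core

lemma card_add_le' {β : Type*} [DecidableEq β] (G₁ G₂ I : Finset β) (h12 : G₁ ⊆ G₂)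
    (hI : I ⊆ G₂) (hd : ∀ b ∈ I, b ∉ G₁) : G₁.card + I.card ≤ G₂.card := by
  have hdisj : Disjoint G₁ I := Finset.disjoint_right.mpr hd
  calc G₁.card + I.card = (G₁ ∪ I).card := (Finset.card_union_of_disjoint hdisj).symm
    _ ≤ G₂.card := Finset.card_le_card (Finset.union_subset h12 hI)

lemma atom_count (α : ℝ) (a : ℕ → ℕ) (N : ℕ) (hN : 0 < N)
    (A : Finset ℤ) (hsub : A ⊆ firstN a N) (m₀ : ℤ) (hm : m₀ ≠ 0) (s₁ s₂ : ℝ)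
    (h₂ : nint ((m₀:ℝ) * α) ≤ s₂ / N) (h₁ : s₁ / N < nint ((m₀:ℝ) * α)) :
    pairCount (fun n => Int.fract ((a n : ℝ) * α)) N s₁
      + ((A ×ˢ A).filter fun q : ℤ × ℤ => q.1 - q.2 = m₀).card
      ≤ pairCount (fun n => Int.fract ((a n : ℝ) * α)) N s₂ := by
  classical
  have hidx : ∀ y ∈ A, ∃ n, n ∈ Finset.Icc 1 N ∧ (a n : ℤ) = y := by
    intro y hy
    have hy' := hsub hy
    rw [firstN, Finset.mem_image] at hy'
    obtain ⟨n, hn, he⟩ := hy'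
    exact ⟨n, hn, he⟩
  choose! idx hidx1 hidx2 using hidx
  set PA := (A ×ˢ A).filter fun q : ℤ × ℤ => q.1 - q.2 = m₀ with hPAdef
  have hPAmem : ∀ q ∈ PA, q.1 ∈ A ∧ q.2 ∈ A ∧ q.1 - q.2 = m₀ := by
    intro q hq
    rw [hPAdef, Finset.mem_filter, Finset.mem_product] at hq
    exact ⟨hq.1.1, hq.1.2, hq.2⟩
  set ψ : ℤ × ℤ → ℕ × ℕ := fun q => (idx q.1, idx q.2) with hψdef
  set img := PA.image ψ with himgdef
  have hval : ∀ q ∈ PA,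
      nint ((Int.fract ((a (idx q.1) : ℝ) * α)) - (Int.fract ((a (idx q.2) : ℝ) * α)))
        = nint ((m₀:ℝ)*α) := by
    intro q hq
    obtain ⟨h1, h2, h3⟩ := hPAmem q hq
    have e1 : ((a (idx q.1) : ℝ)) = ((q.1 : ℤ) : ℝ) := by
      exact_mod_cast congrArg (fun z : ℤ => (z:ℝ)) (hidx2 q.1 h1)
    have e2 : ((a (idx q.2) : ℝ)) = ((q.2 : ℤ) : ℝ) := by
      exact_mod_cast congrArg (fun z : ℤ => (z:ℝ)) (hidx2 q.2 h2)
    rw [e1, e2]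
    have key : Int.fract (((q.1:ℤ):ℝ)*α) - Int.fract (((q.2:ℤ):ℝ)*α)
        = ((m₀:ℤ):ℝ)*α + ((⌊((q.2:ℤ):ℝ)*α⌋ - ⌊((q.1:ℤ):ℝ)*α⌋ : ℤ):ℝ) := by
      simp only [Int.fract]
      rw [← h3]
      push_cast
      ring
    rw [key, nint_add_int]
  have hinj : Set.InjOn ψ PA := by
    intro q hq q' hq' he
    rw [Finset.mem_coe] at hq hq'
    obtain ⟨h1, h2, _⟩ := hPAmem q hq
    obtain ⟨h1', h2', _⟩ := hPAmem q' hq'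
    have hfst : idx q.1 = idx q'.1 := congrArg Prod.fst he
    have hsnd : idx q.2 = idx q'.2 := congrArg Prod.snd he
    have e1 : q.1 = q'.1 := by
      rw [← hidx2 q.1 h1, ← hidx2 q'.1 h1', hfst]
    have e2 : q.2 = q'.2 := by
      rw [← hidx2 q.2 h2, ← hidx2 q'.2 h2', hsnd]
    exact Prod.ext e1 e2
  have himgcard : img.card = PA.card := Finset.card_image_of_injOn hinj
  have hidxne : ∀ q ∈ PA, idx q.1 ≠ idx q.2 := by
    intro q hq hc
    obtain ⟨h1, h2, h3⟩ := hPAmem q hq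
    have : q.1 = q.2 := by rw [← hidx2 q.1 h1, ← hidx2 q.2 h2, hc]
    rw [this] at h3
    simp at h3
    exact hm h3.symm
  unfold pairCount
  rw [← himgcard]
  apply card_add_le'
  · intro p hp
    simp only [Finset.mem_filter] at hp ⊢
    exact ⟨hp.1, hp.2.1, le_trans hp.2.2 (le_trans (le_of_lt h₁) h₂)⟩
  · intro p hp
    rw [himgdef, Finset.mem_image] at hp
    obtain ⟨q, hq, rfl⟩ := hp
    obtain ⟨h1, h2, _⟩ := hPAmem q hq
    simp only [Finset.mem_filter, Finset.mem_product]
    refine ⟨⟨hidx1 q.1 h1, hidx1 q.2 h2⟩, hidxne q hq, ?_⟩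
    show nint ((Int.fract ((a (idx q.1) : ℝ) * α)) - (Int.fract ((a (idx q.2) : ℝ) * α))) ≤ s₂ / N
    rw [hval q hq]
    exact h₂
  · intro p hp hpF
    rw [himgdef, Finset.mem_image] at hp
    obtain ⟨q, hq, rfl⟩ := hp
    simp only [Finset.mem_filter] at hpF
    have := hpF.2.2
    rw [show ((fun n => Int.fract ((a n : ℝ) * α)) (ψ q).1 - (fun n => Int.fract ((a n : ℝ) * α)) (ψ q).2)
      = (Int.fract ((a (idx q.1) : ℝ) * α)) - (Int.fract ((a (idx q.2) : ℝ) * α)) from rfl] at this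
    rw [hval q hq] at this
    linarith

/-- The window predicate for the final pigeonhole. -/
def GoodAt (a : ℕ → ℕ) (α : ℝ) (T'' : ℕ) (w : ℝ) (Nv : ℕ) (t₀ : ℕ) : Prop :=
  ∃ (m₀ : ℤ) (A : Finset ℤ), A ⊆ firstN a Nv ∧ m₀ ≠ 0 ∧
    ((Nv:ℝ)/(T'':ℝ) ≤ (((A ×ˢ A).filter fun q : ℤ × ℤ => q.1 - q.2 = m₀).card : ℝ)) ∧
    (t₀:ℝ) * w ≤ (Nv:ℝ) * nint ((m₀:ℝ)*α) ∧ (Nv:ℝ) * nint ((m₀:ℝ)*α) < ((t₀:ℝ)+1) * w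

lemma window_contra (a : ℕ → ℕ) (α : ℝ)
    (hppc : PoissonianPairCorrelations (fun n => Int.fract ((a n : ℝ) * α)))
    (T'' : ℕ) (hT'' : 0 < T'') (w : ℝ) (hw : w = 1/(8*(T'':ℝ)))
    (Nseq : ℕ → ℕ) (hmono : StrictMono Nseq) (hpos : ∀ i, 0 < Nseq i)
    (t₀ : ℕ) (hfreq : ∃ᶠ i in atTop, GoodAt a α T'' w (Nseq i) t₀) : False := by
  classical
  have hT''R : (0:ℝ) < (T'':ℝ) := by exact_mod_cast hT''
  have hwpos : 0 < w := by rw [hw]; positivity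
  have h4w : 4*w = 1/(2*(T'':ℝ)) := by rw [hw]; field_simp; ring
  set s₂ : ℝ := ((t₀:ℝ)+1) * w with hs₂def
  set s₁ : ℝ := if t₀ ≤ 1 then -w else ((t₀:ℝ)-1) * w with hs₁def
  have hs₂pos : 0 < s₂ := by rw [hs₂def]; positivity
  have hNt : Tendsto Nseq atTop atTop := hmono.tendsto_atTop
  have hdiff : ∃ ℓ : ℝ, ℓ ≤ 1/(2*(T'':ℝ)) ∧
      Tendsto (fun i => (pairCount (fun n => Int.fract ((a n : ℝ) * α)) (Nseq i) s₂ : ℝ)/(Nseq i)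
        - (pairCount (fun n => Int.fract ((a n : ℝ) * α)) (Nseq i) s₁ : ℝ)/(Nseq i))
        atTop (nhds ℓ) := by
    by_cases ht01 : t₀ ≤ 1
    · refine ⟨2*s₂, ?_, ?_⟩
      · have ht1 : (t₀:ℝ) ≤ 1 := by exact_mod_cast ht01
        have : 2*s₂ ≤ 4*w := by
          rw [hs₂def]; nlinarith
        linarith [h4w]
      · have hzero : ∀ i, pairCount (fun n => Int.fract ((a n : ℝ) * α)) (Nseq i) s₁ = 0 := by
          intro i
          have hs₁neg : s₁ < 0 := by rw [hs₁def, if_pos ht01]; linarith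
          have hNiR : (0:ℝ) < (Nseq i : ℝ) := by exact_mod_cast hpos i
          unfold pairCount
          rw [Finset.card_eq_zero, Finset.filter_eq_empty_iff]
          intro p _
          rintro ⟨_, hle⟩
          have : s₁ / (Nseq i : ℝ) < 0 := div_neg_of_neg_of_pos hs₁neg hNiR
          have := nint_nonneg ((fun n => Int.fract ((a n : ℝ) * α)) p.1
            - (fun n => Int.fract ((a n : ℝ) * α)) p.2)
          linarith
        have hbase := (hppc s₂ hs₂pos).comp hNt
        apply Filter.Tendsto.congr ?_ hbase
        intro i
        rw [hzero i]
        simp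
    · push_neg at ht01
      have hs₁eq : s₁ = ((t₀:ℝ)-1) * w := by rw [hs₁def, if_neg (by omega)]
      have hs₁pos : 0 < s₁ := by
        rw [hs₁eq]
        have : (2:ℝ) ≤ (t₀:ℝ) := by exact_mod_cast ht01
        nlinarith
      refine ⟨2*s₂ - 2*s₁, ?_, ?_⟩
      · have : s₂ - s₁ = 2*w := by rw [hs₂def, hs₁eq]; ring
        linarith [h4w]
      · exact ((hppc s₂ hs₂pos).comp hNt).sub ((hppc s₁ hs₁pos).comp hNt)
  obtain ⟨ℓ, hℓ, htend⟩ := hdiff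
  have hℓ' : ℓ < 3/(4*(T'':ℝ)) := by
    have : 1/(2*(T'':ℝ)) < 3/(4*(T'':ℝ)) := by
      rw [div_lt_div_iff₀ (by positivity) (by positivity)]
      nlinarith
    linarith
  have hev := htend.eventually_lt_const hℓ'
  obtain ⟨i, hGi, hlt⟩ := (hfreq.and_eventually hev).exists
  obtain ⟨m₀, A, hsub, hm, hcnt, hlow, hhigh⟩ := hGi
  have hN : 0 < Nseq i := hpos i
  have hNR : (0:ℝ) < (Nseq i : ℝ) := by exact_mod_cast hN
  have h₂ : nint ((m₀:ℝ) * α) ≤ s₂ / (Nseq i : ℝ) := by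
    rw [le_div_iff₀ hNR]
    calc nint ((m₀:ℝ)*α) * (Nseq i:ℝ) = (Nseq i:ℝ) * nint ((m₀:ℝ)*α) := by ring
      _ ≤ s₂ := le_of_lt hhigh
  have h₁ : s₁ / (Nseq i : ℝ) < nint ((m₀:ℝ) * α) := by
    rw [div_lt_iff₀ hNR]
    by_cases ht01 : t₀ ≤ 1
    · have hs₁neg : s₁ < 0 := by rw [hs₁def, if_pos ht01]; linarith
      have h0 := nint_nonneg ((m₀:ℝ)*α)
      nlinarith
    · push_neg at ht01
      have hs₁eq : s₁ = ((t₀:ℝ)-1) * w := by rw [hs₁def, if_neg (by omega)]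
      have : s₁ < (t₀:ℝ) * w := by rw [hs₁eq]; nlinarith
      calc s₁ < (t₀:ℝ) * w := this
        _ ≤ (Nseq i:ℝ) * nint ((m₀:ℝ)*α) := hlow
        _ = nint ((m₀:ℝ)*α) * (Nseq i:ℝ) := by ring
  have hcount := atom_count α a (Nseq i) hN A hsub m₀ hm s₁ s₂ h₂ h₁
  have hcountR : (pairCount (fun n => Int.fract ((a n : ℝ) * α)) (Nseq i) s₁ : ℝ)
      + (((A ×ˢ A).filter fun q : ℤ × ℤ => q.1 - q.2 = m₀).card : ℝ)
      ≤ (pairCount (fun n => Int.fract ((a n : ℝ) * α)) (Nseq i) s₂ : ℝ) := by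
    exact_mod_cast hcount
  have hXN : (Nseq i:ℝ)/(T'':ℝ)
      ≤ (pairCount (fun n => Int.fract ((a n : ℝ) * α)) (Nseq i) s₂ : ℝ)
        - (pairCount (fun n => Int.fract ((a n : ℝ) * α)) (Nseq i) s₁ : ℝ) := by
    linarith
  have hfrac : 1/(T'':ℝ)
      ≤ (pairCount (fun n => Int.fract ((a n : ℝ) * α)) (Nseq i) s₂ : ℝ)/(Nseq i)
        - (pairCount (fun n => Int.fract ((a n : ℝ) * α)) (Nseq i) s₁ : ℝ)/(Nseq i) := by
    rw [div_sub_div_same]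
    rw [div_le_div_iff₀ hT''R hNR]
    rw [div_le_iff₀ hT''R] at hXN
    linarith
  have : (1:ℝ)/(T'':ℝ) < 3/(4*(T'':ℝ)) := lt_of_le_of_lt hfrac hlt
  rw [div_lt_div_iff₀ hT''R (by positivity)] at this
  nlinarith

set_option maxHeartbeats 1600000 in
theorem stmt2 (a : ℕ → ℕ) (ha : StrictMono a) (ha_pos : ∀ n, 0 < a n)
    (d : ℕ) (hd : 0 < d) (hqa : QuasiArithmetic a d) :
    ¬ ∃ α : ℝ, PoissonianPairCorrelations (fun n => Int.fract ((a n : ℝ) * α)) := by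
  classical
  rintro ⟨α, hppc⟩
  obtain ⟨C0, K0, hC00, hK00, Nseq, hNmono, hNpos, hprop⟩ := hqa
  set C : ℝ := min C0 1 with hCdef
  have hC : 0 < C := lt_min hC00 one_pos
  have hC1 : C ≤ 1 := min_le_right _ _
  set K : ℝ := max K0 1 with hKdef
  have hK : 1 ≤ K := le_max_right _ _
  have hC2 : (0:ℝ) < C^2 := by positivity
  have hC21 : C^2 ≤ 1 := by nlinarith
  set T'' : ℕ := ⌈8 * K / C^2⌉₊ with hT''def
  have hT''ge : 8 * K / C^2 ≤ (T'':ℝ) := Nat.le_ceil _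
  have hT''pos : 0 < T'' := by
    have h8 : (8:ℝ) ≤ 8 * K / C ^ 2 := by rw [le_div_iff₀ hC2]; nlinarith
    have : (0:ℝ) < (T'':ℝ) := lt_of_lt_of_le (by norm_num) (le_trans h8 hT''ge)
    exact_mod_cast this
  have hT''R : (0:ℝ) < (T'':ℝ) := by exact_mod_cast hT''pos
  set T : ℕ := 8*d*T'' with hTdef
  set Sc : ℕ := ⌈(2 / C ^ 2) * (((T : ℝ) ^ d + 1) / (T'':ℝ) + 1)⌉₊ with hScdef
  have hScge : (2 / C ^ 2) * (((T : ℝ) ^ d + 1) / (T'':ℝ) + 1) ≤ (Sc:ℝ) := Nat.le_ceil _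
  set w : ℝ := 1/(8*(T'':ℝ)) with hwdef
  have hwpos : 0 < w := by rw [hwdef]; positivity
  set Sstar : ℕ := 2*Sc*T'' with hSstardef
  set Q : ℕ := 8*T''*Sstar with hQdef
  have hGood : ∀ i, Sc ≤ Nseq i → ∃ t₀ ≤ Q, GoodAt a α T'' w (Nseq i) t₀ := by
    intro i hi
    obtain ⟨A, hAsub, hAcard, h, k, sv, hsv, hAP, hM⟩ := hprop i
    have hNR : (0:ℝ) < (Nseq i:ℝ) := by exact_mod_cast hNpos i
    have hAcard' : C * (Nseq i) ≤ (A.card:ℝ) :=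
      le_trans (mul_le_mul_of_nonneg_right (min_le_left C0 1) (le_of_lt hNR)) hAcard
    have hMK : ((∏ j, sv j : ℕ):ℝ) ≤ K * Nseq i :=
      le_trans hM (mul_le_mul_of_nonneg_right (le_max_left K0 1) (le_of_lt hNR))
    have hAN : A.card ≤ Nseq i := by
      calc A.card ≤ (firstN a (Nseq i)).card := Finset.card_le_card hAsub
        _ ≤ (Finset.Icc 1 (Nseq i)).card := Finset.card_image_le
        _ = Nseq i := by rw [Nat.card_Icc]; omega
    obtain ⟨m₀, hm₀ne, hm₀nint, hm₀cnt⟩ := core α C K hC hC1 hK d hd T'' T Sc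
      hT''ge hTdef hScge (Nseq i) hi A hAcard' hAN h k sv hsv hAP hMK
    set v : ℝ := (Nseq i:ℝ) * nint ((m₀:ℝ)*α) with hvdef
    have hv0 : 0 ≤ v := mul_nonneg (le_of_lt hNR) (nint_nonneg _)
    have hvS : v ≤ (Sstar:ℝ) := by
      have h2 := hm₀nint
      rw [le_div_iff₀ hNR] at h2
      have h3 : (Sstar:ℝ) = 2*(Sc:ℝ)*(T'':ℝ) := by rw [hSstardef]; push_cast; ring
      rw [hvdef, h3]
      nlinarith [h2]
    have hvw0 : (0:ℝ) ≤ v/w := by positivity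
    refine ⟨⌊v/w⌋₊, ?_, m₀, A, hAsub, hm₀ne, hm₀cnt, ?_, ?_⟩
    · have hQR : (Q:ℝ) = 8*(T'':ℝ)*(Sstar:ℝ) := by rw [hQdef]; push_cast; ring
      have hvw : v/w ≤ (Q:ℝ) := by
        have he : v/w = v*(8*(T'':ℝ)) := by rw [hwdef]; field_simp
        rw [he, hQR]
        nlinarith [mul_le_mul_of_nonneg_right hvS
          (by positivity : (0:ℝ) ≤ 8*(T'':ℝ))]
      calc ⌊v/w⌋₊ ≤ ⌊(Q:ℝ)⌋₊ := Nat.floor_mono hvw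
        _ = Q := Nat.floor_natCast _
    · have h1 : ((⌊v/w⌋₊:ℕ):ℝ) ≤ v/w := Nat.floor_le hvw0
      calc ((⌊v/w⌋₊:ℕ):ℝ) * w ≤ (v/w)*w :=
        mul_le_mul_of_nonneg_right h1 (le_of_lt hwpos)
        _ = v := div_mul_cancel₀ _ (ne_of_gt hwpos)
    · have h1 : v/w < ((⌊v/w⌋₊:ℕ):ℝ) + 1 := Nat.lt_floor_add_one _
      calc v = (v/w)*w := (div_mul_cancel₀ _ (ne_of_gt hwpos)).symm
        _ < (((⌊v/w⌋₊:ℕ):ℝ)+1)*w := by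
          apply mul_lt_mul_of_pos_right h1 hwpos
  have hnotfreq : ∀ t₀ ∈ Finset.range (Q+1), ∀ᶠ i in atTop, ¬ GoodAt a α T'' w (Nseq i) t₀ := by
    intro t₀ _
    by_contra hcon
    rw [Filter.not_eventually] at hcon
    have hfreq : ∃ᶠ i in atTop, GoodAt a α T'' w (Nseq i) t₀ := by
      apply hcon.mono
      intro i hi
      by_contra hcc
      exact hi hcc
    exact window_contra a α hppc T'' hT''pos w hwdef Nseq hNmono hNpos t₀ hfreq
  have hev1 : ∀ᶠ i in atTop, ∀ t₀ ∈ Finset.range (Q+1), ¬ GoodAt a α T'' w (Nseq i) t₀ :=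
    (eventually_all_finset (Finset.range (Q+1))).mpr hnotfreq
  have hev2 : ∀ᶠ i in atTop, Sc ≤ Nseq i := by
    filter_upwards [Filter.eventually_ge_atTop Sc] with i hi
    exact le_trans hi hNmono.le_apply
  obtain ⟨i, hi1, hi2⟩ := (hev1.and hev2).exists
  obtain ⟨t₀, ht₀, hG⟩ := hGood i hi2
  exact hi1 t₀ (Finset.mem_range.mpr (Nat.lt_succ_of_le ht₀)) hG
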